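/- Let K ≥ 1 and n ≥ 1 be integers, and let p(1),…,p(n) ∈ Σ_K. For k ≤ n set P(k) = p(1)+⋯+p(k). Define N(0) = 0 ∈ ℝ^K and, for k = 0,…,n−1, pick I_{k+1} ∈ argmax_{1 ≤ i ≤ K} [P_i(k+1) − N_i(k)] and set N(k+1) = N(k) + δ_{I_{k+1}}, where δ_i is the i-th standard basis vector. Then max_{1 ≤ i ≤ K} |N_i(n) − P_i(n)| ≤ K − 1. -/

import Mathlib

/-- The probability simplex on `Fin K`. -/
def simplex (K : ℕ) : Set (Fin K → ℝ) :=
  {w | (∀ a, 0 ≤ w a) ∧ ∑ a, w a = 1}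

/-- the deterministic C-Tracking lemma. The greedy counting sequence `N`
(incrementing at each step a coordinate maximizing `P_i(k+1) − N_i(k)`) tracks the
cumulated sums `P(k) = p(1) + ⋯ + p(k)` of probability vectors within `K − 1`.
Here `p k` stands for the paper's `p(k+1)`, so `P n i = ∑_{s<n} p s i`. -/
theorem c_tracking (K n : ℕ) (hK : 1 ≤ K) (hn : 1 ≤ n)
    (p : ℕ → Fin K → ℝ) (hp : ∀ k < n, p k ∈ simplex K)
    (N : ℕ → Fin K → ℝ) (hN0 : ∀ i, N 0 i = 0)
    (I : ℕ → Fin K)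
    (hargmax : ∀ k < n, ∀ j : Fin K,
      (∑ s ∈ Finset.range (k + 1), p s j) - N k j ≤
        (∑ s ∈ Finset.range (k + 1), p s (I k)) - N k (I k))
    (hrec : ∀ k < n, ∀ i : Fin K, N (k + 1) i = N k i + if I k = i then 1 else 0) :
    ∀ i : Fin K, |N n i - ∑ s ∈ Finset.range n, p s i| ≤ (K : ℝ) - 1 := by
  -- sum of N over coordinates
  have sumN : ∀ k ≤ n, ∑ i, N k i = (k : ℝ) := by
    intro k hk
    induction k with
    | zero => simp [hN0]
    | succ m ih =>
      have hm : m < n := hk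
      have ih' := ih (le_of_lt hm)
      have : ∑ i, N (m + 1) i = ∑ i, (N m i + if I m = i then 1 else 0) :=
        Finset.sum_congr rfl fun i _ => hrec m hm i
      rw [this, Finset.sum_add_distrib, ih', Finset.sum_ite_eq]
      simp
  -- sum of P over coordinates
  have sumP : ∀ k ≤ n, ∑ i, ∑ s ∈ Finset.range k, p s i = (k : ℝ) := by
    intro k hk
    rw [Finset.sum_comm]
    have : ∀ s ∈ Finset.range k, ∑ i, p s i = 1 := by
      intro s hs
      exact (hp s (lt_of_lt_of_le (Finset.mem_range.mp hs) hk)).2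
    rw [Finset.sum_congr rfl this]
    simp
  -- key bound: N k i - P k i ≤ 1
  have hD : ∀ k ≤ n, ∀ i, N k i - ∑ s ∈ Finset.range k, p s i ≤ 1 := by
    intro k hk
    induction k with
    | zero => intro i; simp [hN0]
    | succ m ih =>
      have hm : m < n := hk
      have ih' := ih (le_of_lt hm)
      intro i
      rw [hrec m hm i, Finset.sum_range_succ]
      have hpm := hp m hm
      by_cases hi : I m = i
      · subst hi
        -- need : ∑_{s<m+1} p s (I m) - N m (I m) ≥ 0
        have hsum1 : ∑ j, ((∑ s ∈ Finset.range (m + 1), p s j) - N m j) = 1 := by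
          rw [Finset.sum_sub_distrib, sumP (m + 1) hk, sumN m (le_of_lt hm)]
          push_cast; ring
        have hle : (1 : ℝ) ≤ K * ((∑ s ∈ Finset.range (m + 1), p s (I m)) - N m (I m)) := by
          calc (1 : ℝ) = ∑ j, ((∑ s ∈ Finset.range (m + 1), p s j) - N m j) := hsum1.symm
            _ ≤ ∑ _j : Fin K, ((∑ s ∈ Finset.range (m + 1), p s (I m)) - N m (I m)) :=
                Finset.sum_le_sum fun j _ => hargmax m hm j
            _ = K * ((∑ s ∈ Finset.range (m + 1), p s (I m)) - N m (I m)) := by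
                simp [Finset.sum_const, nsmul_eq_mul]; ring
        have hK0 : (0 : ℝ) < K := by positivity
        have hpos : 0 ≤ (∑ s ∈ Finset.range (m + 1), p s (I m)) - N m (I m) := by
          nlinarith
        rw [Finset.sum_range_succ] at hpos
        rw [if_pos rfl]
        linarith
      · simp only [if_neg hi]
        have := hpm.1 i
        linarith [ih' i]
  -- identity: D i = - ∑_{j ≠ i} D j
  intro i
  have hsum0 : ∑ j, (N n j - ∑ s ∈ Finset.range n, p s j) = 0 := by
    rw [Finset.sum_sub_distrib, sumN n le_rfl, sumP n le_rfl]; ring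
  have hsplit : (N n i - ∑ s ∈ Finset.range n, p s i)
      + ∑ j ∈ Finset.univ.erase i, (N n j - ∑ s ∈ Finset.range n, p s j) = 0 := by
    exact (Finset.add_sum_erase _ _ (Finset.mem_univ i)).trans hsum0
  have hcard : (Finset.univ.erase i).card = K - 1 := by
    rw [Finset.card_erase_of_mem (Finset.mem_univ i)]
    simp
  have hcardR : ((Finset.univ.erase i).card : ℝ) = (K : ℝ) - 1 := by
    rw [hcard]
    have : (1 : ℕ) ≤ K := hK
    push_cast [Nat.cast_sub this]
    ring
  have herase_le : ∑ j ∈ Finset.univ.erase i, (N n j - ∑ s ∈ Finset.range n, p s j)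
      ≤ (K : ℝ) - 1 := by
    calc ∑ j ∈ Finset.univ.erase i, (N n j - ∑ s ∈ Finset.range n, p s j)
        ≤ ∑ _j ∈ Finset.univ.erase i, (1 : ℝ) :=
          Finset.sum_le_sum fun j _ => hD n le_rfl j
      _ = (K : ℝ) - 1 := by rw [Finset.sum_const, nsmul_eq_mul, mul_one, hcardR]
  rw [abs_le]
  constructor
  · linarith
  · rcases Nat.lt_or_ge K 2 with hK2 | hK2
    · -- K = 1 : erase set is empty
      interval_cases K
      have hempty : (Finset.univ.erase i) = (∅ : Finset (Fin 1)) := by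
        apply Finset.eq_empty_of_forall_notMem
        intro j hj
        exact (Finset.mem_erase.mp hj).1 (Subsingleton.elim j i)
      rw [hempty, Finset.sum_empty] at hsplit
      norm_num
      linarith
    · have : (2 : ℝ) ≤ K := by exact_mod_cast hK2
      linarith [hD n le_rfl i]
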